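/- (Example with deterministic X₂.) Let P be the probability distribution on {0,1,2} × {0,1} × {0,1} (values of (S, X₁, X₂)) with P(0,0,0)=1/6, P(0,1,0)=1/6, P(1,0,1)=1/6, P(1,1,1)=1/6, P(2,1,1)=1/3, and all other atoms 0, and let f : {0,1,2} → {0,1} with f(0)=f(1)=0 and f(2)=1. Let u : {0,1} × {0,1,2} → ℝ be the utility with u(1,1)=1, u(1,2)=−1 and u(a,s)=0 otherwise (first argument the action, second the state). Let p be the marginal of S and let κ₁, κ₂ be the channels with entries P(X₁=x|S=s), P(X₂=x|S=s). Then: (a) X₂ is a deterministic function of S (P-almost surely X₂ = 0 if S=0 and X₂ = 1 otherwise); (b) S and X₁ are conditionally independent given f(S); (c) the channels (X₁←f(S)) and (X₂←f(S)) are equal; (d) the optimal expected utilities are U(p,u,κ₂) = 0 and U(p,u,κ₁) = 1/6 > 0; consequently κ₁ is not a garbling of κ₂. -/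
import Mathlib


open Finset

/-- A probability distribution on a finite set. -/
def IsDist {S : Type} [Fintype S] (p : S → ℝ) : Prop :=
  (∀ s, 0 ≤ p s) ∧ ∑ s, p s = 1

/-- A channel from `S` to `X`: a column-stochastic matrix. -/
def IsChannel {S X : Type} [Fintype S] [Fintype X] (κ : X → S → ℝ) : Prop :=
  (∀ x s, 0 ≤ κ x s) ∧ ∀ s, ∑ x, κ x s = 1

/-- `κ₁` is a garbling of `κ₂` (the Blackwell order `κ₁ ⪯ κ₂`). -/
def IsGarbling {S X₁ X₂ : Type} [Fintype S] [Fintype X₁] [Fintype X₂]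
    (κ₁ : X₁ → S → ℝ) (κ₂ : X₂ → S → ℝ) : Prop :=
  ∃ lam : X₁ → X₂ → ℝ, IsChannel lam ∧ ∀ x₁ s, κ₁ x₁ s = ∑ x₂, lam x₁ x₂ * κ₂ x₂ s

/-- Optimal expected utility: maximum over decision rules `d : X → A`. -/
noncomputable def optUtility {S X A : Type} [Fintype S] [Fintype X] [Fintype A]
    (p : S → ℝ) (u : A × S → ℝ) (κ : X → S → ℝ) : ℝ :=
  ⨆ d : X → A, ∑ s, ∑ x, p s * κ x s * u (d x, s)

/-- Mutual information between input (with distribution `p`) and output of channel `κ`;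
terms with `κ x s = 0` are taken to be `0`. -/
noncomputable def mutualInfo {S X : Type} [Fintype S] [Fintype X]
    (p : S → ℝ) (κ : X → S → ℝ) : ℝ :=
  ∑ s, ∑ x, if κ x s = 0 then 0 else
    p s * κ x s * Real.log (κ x s / ∑ s', p s' * κ x s')

/-- Channel composition: `(κ·λ) x s = ∑ t, κ x t * λ t s`. -/
def chanComp {S T X : Type} [Fintype S] [Fintype T] [Fintype X]
    (κ : X → T → ℝ) (lam : T → S → ℝ) : X → S → ℝ :=
  fun x s => ∑ t, κ x t * lam t s

/-- Marginal on `S` of a joint distribution on `S × X₁ × X₂`. -/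
noncomputable def margS3 {S X₁ X₂ : Type} [Fintype S] [Fintype X₁] [Fintype X₂]
    (P : S × X₁ × X₂ → ℝ) (s : S) : ℝ := ∑ x₁, ∑ x₂, P (s, x₁, x₂)

/-- The channel `X₁ ← S` of conditional probabilities `P(X₁ = x₁ | S = s)`. -/
noncomputable def chan1of3 {S X₁ X₂ : Type} [Fintype S] [Fintype X₁] [Fintype X₂]
    (P : S × X₁ × X₂ → ℝ) (x₁ : X₁) (s : S) : ℝ :=
  (∑ x₂, P (s, x₁, x₂)) / margS3 P s

/-- The channel `X₂ ← S` of conditional probabilities `P(X₂ = x₂ | S = s)`. -/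
noncomputable def chan2of3 {S X₁ X₂ : Type} [Fintype S] [Fintype X₁] [Fintype X₂]
    (P : S × X₁ × X₂ → ℝ) (x₂ : X₂) (s : S) : ℝ :=
  (∑ x₁, P (s, x₁, x₂)) / margS3 P s

/-- Pushforward of a joint distribution on `S × X₁ × X₂` along `f : S → S'`. -/
noncomputable def push3 {S S' X₁ X₂ : Type} [Fintype S] [Fintype X₁] [Fintype X₂]
    [DecidableEq S'] (f : S → S') (P : S × X₁ × X₂ → ℝ) : S' × X₁ × X₂ → ℝ :=
  fun q => ∑ s ∈ Finset.univ.filter (fun s => f s = q.1), P (s, q.2.1, q.2.2)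

/-- The joint distribution of `(S, X₁, X₂)` from Example 2 (deterministic `X₂`). -/
noncomputable def Pdet : Fin 3 × Fin 2 × Fin 2 → ℝ := fun q =>
  if q = (0, 0, 0) then 1/6
  else if q = (0, 1, 0) then 1/6
  else if q = (1, 0, 1) then 1/6
  else if q = (1, 1, 1) then 1/6
  else if q = (2, 1, 1) then 1/3
  else 0

/-- The coarse-graining `f : {0,1,2} → {0,1}` with `f(0) = f(1) = 0`, `f(2) = 1`. -/
def fDet : Fin 3 → Fin 2 := fun s => if s = 2 then 1 else 0

lemma marg_val : ∀ s, margS3 Pdet s = 1/3 := by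
  intro s
  fin_cases s <;>
    simp [margS3, Pdet, Fin.sum_univ_succ, Prod.ext_iff] <;> norm_num

lemma chan1_val : ∀ (x : Fin 2) (s : Fin 3),
    chan1of3 Pdet x s = ![![1/2, 1/2, 0], ![1/2, 1/2, 1]] x s := by
  intro x s
  fin_cases x <;> fin_cases s <;>
    simp [chan1of3, marg_val, Pdet, Fin.sum_univ_succ, Prod.ext_iff] <;> norm_num

lemma chan2_val : ∀ (x : Fin 2) (s : Fin 3),
    chan2of3 Pdet x s = ![![1, 0, 0], ![0, 1, 1]] x s := by
  intro x s
  fin_cases x <;> fin_cases s <;>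
    simp [chan2of3, marg_val, Pdet, Fin.sum_univ_succ, Prod.ext_iff] <;> norm_num

lemma push_marg_val : ∀ t, margS3 (push3 fDet Pdet) t = ![2/3, 1/3] t := by
  intro t
  fin_cases t <;>
    simp [margS3, push3, fDet, Pdet, Fin.sum_univ_succ, Finset.sum_filter,
      Prod.ext_iff] <;> norm_num

lemma push_chan1_val : ∀ (x t : Fin 2),
    chan1of3 (push3 fDet Pdet) x t = ![![1/2, 0], ![1/2, 1]] x t := by
  intro x t
  fin_cases x <;> fin_cases t <;>
    simp [chan1of3, push_marg_val, push3, fDet, Pdet, Fin.sum_univ_succ,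
      Finset.sum_filter, Prod.ext_iff] <;> norm_num

lemma push_chan2_val : ∀ (x t : Fin 2),
    chan2of3 (push3 fDet Pdet) x t = ![![1/2, 0], ![1/2, 1]] x t := by
  intro x t
  fin_cases x <;> fin_cases t <;>
    simp [chan2of3, push_marg_val, push3, fDet, Pdet, Fin.sum_univ_succ,
      Finset.sum_filter, Prod.ext_iff] <;> norm_num
lemma opt_key1 (d : Fin 2 → Fin 2) :
    (∑ s, ∑ x, margS3 Pdet s * chan1of3 Pdet x s *
      (fun as : Fin 2 × Fin 3 =>
        if as = (1, 1) then (1 : ℝ) else if as = (1, 2) then -1 else 0) (d x, s))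
    = ![![0, -1/6], ![1/6, 0]] (d 0) (d 1) := by
  have h0 : d 0 = 0 ∨ d 0 = 1 := by omega
  have h1 : d 1 = 0 ∨ d 1 = 1 := by omega
  rcases h0 with h0 | h0 <;> rcases h1 with h1 | h1 <;>
    simp [marg_val, chan1_val, Fin.sum_univ_succ, h0, h1, Prod.ext_iff] <;> norm_num

lemma opt_key2 (d : Fin 2 → Fin 2) :
    (∑ s, ∑ x, margS3 Pdet s * chan2of3 Pdet x s *
      (fun as : Fin 2 × Fin 3 =>
        if as = (1, 1) then (1 : ℝ) else if as = (1, 2) then -1 else 0) (d x, s))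
    = 0 := by
  have h0 : d 0 = 0 ∨ d 0 = 1 := by omega
  have h1 : d 1 = 0 ∨ d 1 = 1 := by omega
  rcases h0 with h0 | h0 <;> rcases h1 with h1 | h1 <;>
    simp [marg_val, chan2_val, Fin.sum_univ_succ, h0, h1, Prod.ext_iff] <;> norm_num

/-- Example with deterministic `X₂`: (a) `X₂` is almost surely a function
of `S`; (b) `S` and `X₁` are conditionally independent given `f(S)`; (c) the channels
`X₁ ← f(S)` and `X₂ ← f(S)` are equal; (d) with the utility `u(1,1) = 1`, `u(1,2) = -1`,
`u = 0` otherwise, the optimal utilities are `U(p,u,κ₂) = 0 < 1/6 = U(p,u,κ₁)`;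
consequently `κ₁` is not a garbling of `κ₂`. -/
theorem det_example :
    -- (a) X₂ is a deterministic function of S (almost surely)
    (∀ (s : Fin 3) (x₁ x₂ : Fin 2), Pdet (s, x₁, x₂) ≠ 0 →
      x₂ = (if s = 0 then 0 else 1)) ∧
    -- (b) S and X₁ are conditionally independent given f(S)
    (∀ s, 0 < margS3 Pdet s →
      ∀ x₁, chan1of3 Pdet x₁ s = chan1of3 (push3 fDet Pdet) x₁ (fDet s)) ∧
    -- (c) the channels X₁ ← f(S) and X₂ ← f(S) are equal
    (∀ x t, chan1of3 (push3 fDet Pdet) x t = chan2of3 (push3 fDet Pdet) x t) ∧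
    -- (d) utility computations and the failure of the Blackwell relation
    optUtility (margS3 Pdet)
        (fun as : Fin 2 × Fin 3 =>
          if as = (1, 1) then (1 : ℝ) else if as = (1, 2) then -1 else 0)
        (chan2of3 Pdet) = 0 ∧
    optUtility (margS3 Pdet)
        (fun as : Fin 2 × Fin 3 =>
          if as = (1, 1) then (1 : ℝ) else if as = (1, 2) then -1 else 0)
        (chan1of3 Pdet) = 1/6 ∧
    (0 : ℝ) < 1/6 ∧
    ¬ IsGarbling (chan1of3 Pdet) (chan2of3 Pdet) := by
  refine ⟨?_, ?_, ?_, ?_, ?_, by norm_num, ?_⟩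
  · intro s x₁ x₂ hne
    fin_cases s <;> fin_cases x₁ <;> fin_cases x₂ <;> simp_all [Pdet, Prod.ext_iff]
  · intro s _ x₁
    rw [chan1_val, push_chan1_val]
    fin_cases s <;> fin_cases x₁ <;> simp [fDet]
  · intro x t
    rw [push_chan1_val, push_chan2_val]
  · unfold optUtility
    rw [iSup_congr opt_key2, ciSup_const]
  · unfold optUtility
    apply le_antisymm
    · apply ciSup_le
      intro d
      rw [opt_key1 d]
      have h0 : d 0 = 0 ∨ d 0 = 1 := by omega
      have h1 : d 1 = 0 ∨ d 1 = 1 := by omega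
      rcases h0 with h0 | h0 <;> rcases h1 with h1 | h1 <;> simp [h0, h1] <;> norm_num
    · have hb : BddAbove (Set.range fun d : Fin 2 → Fin 2 =>
          ∑ s, ∑ x, margS3 Pdet s * chan1of3 Pdet x s *
            (fun as : Fin 2 × Fin 3 =>
              if as = (1, 1) then (1 : ℝ) else if as = (1, 2) then -1 else 0) (d x, s)) :=
        (Set.finite_range _).bddAbove
      have h := le_ciSup hb ![1, 0]
      rw [opt_key1] at h
      simpa using h
  · rintro ⟨lam, ⟨-, -⟩, h⟩
    have h11 := h 1 1
    have h12 := h 1 2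
    rw [chan1_val] at h11 h12
    simp [chan2_val, Fin.sum_univ_succ] at h11 h12
    norm_num at h11 h12
    linarith
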